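/- Let 𝒯 be a monoid of transformations of a nonempty set X. There exists a 𝒯-invariant coherent prevision on X, i.e. a coherent prevision P with P(f∘T) = P(f) for every gamble f and every T ∈ 𝒯, if and only if for every n ≥ 0, all gambles f₁,…,f_n on X and all T₁,…,T_n ∈ 𝒯 one has sup_{x∈X} Σ_{k=1}^n [ f_k(x) − f_k(T_k x) ] ≥ 0. -/

import Mathlib

def IsGamble {X : Type*} (f : X → ℝ) : Prop :=
  BddAbove (Set.range f) ∧ BddBelow (Set.range f)

def IsCoherentLowerPrevision {X : Type*} (L : (X → ℝ) → ℝ) : Prop :=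
  (∀ f : X → ℝ, IsGamble f → sInf (Set.range f) ≤ L f) ∧
  (∀ f g : X → ℝ, IsGamble f → IsGamble g → L f + L g ≤ L (f + g)) ∧
  (∀ f : X → ℝ, IsGamble f → ∀ c : ℝ, 0 ≤ c → L (c • f) = c * L f)

def IsCoherentPrevision {X : Type*} (P : (X → ℝ) → ℝ) : Prop :=
  (∀ f g : X → ℝ, IsGamble f → IsGamble g → P (f + g) = P f + P g) ∧
  (∀ f : X → ℝ, IsGamble f → sInf (Set.range f) ≤ P f)

def IsTransformationMonoid {X : Type*} (𝒯 : Set (X → X)) : Prop :=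
  id ∈ 𝒯 ∧ ∀ S ∈ 𝒯, ∀ T ∈ 𝒯, S ∘ T ∈ 𝒯

def Dominating {X : Type*} (L : (X → ℝ) → ℝ) : Set ((X → ℝ) → ℝ) :=
  {P | IsCoherentPrevision P ∧ ∀ f : X → ℝ, IsGamble f → L f ≤ P f}

namespace Stmt8Aux

variable {X : Type*}

lemma exists_abs_bound {u : X → ℝ} (hu : IsGamble u) : ∃ M, ∀ x, |u x| ≤ M := by
  obtain ⟨⟨a, ha⟩, ⟨b, hb⟩⟩ := hu
  refine ⟨max a (-b), fun x => abs_le.2 ⟨?_, ?_⟩⟩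
  · have := hb (Set.mem_range_self x)
    have : -max a (-b) ≤ b := by
      have := le_max_right a (-b); linarith
    have := hb (Set.mem_range_self x); linarith [le_max_right a (-b)]
  · exact le_trans (ha (Set.mem_range_self x)) (le_max_left _ _)

lemma isGamble_of_bound {u : X → ℝ} {M : ℝ} (h : ∀ x, |u x| ≤ M) : IsGamble u := by
  constructor
  · exact ⟨M, by rintro y ⟨x, rfl⟩; exact (abs_le.1 (h x)).2⟩
  · exact ⟨-M, by rintro y ⟨x, rfl⟩; exact (abs_le.1 (h x)).1⟩

lemma isGamble_const (c : ℝ) : IsGamble (fun _ : X => c) :=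
  isGamble_of_bound (M := |c|) fun _ => le_rfl

lemma isGamble_zero : IsGamble (0 : X → ℝ) := isGamble_const 0

lemma _root_.IsGamble.add' {u v : X → ℝ} (hu : IsGamble u) (hv : IsGamble v) :
    IsGamble (fun x => u x + v x) := by
  obtain ⟨M, hM⟩ := exists_abs_bound hu
  obtain ⟨N, hN⟩ := exists_abs_bound hv
  exact isGamble_of_bound (M := M + N) fun x =>
    (abs_add_le _ _).trans (add_le_add (hM x) (hN x))

lemma _root_.IsGamble.neg' {u : X → ℝ} (hu : IsGamble u) : IsGamble (fun x => -u x) := by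
  obtain ⟨M, hM⟩ := exists_abs_bound hu
  exact isGamble_of_bound (M := M) fun x => by rw [abs_neg]; exact hM x

lemma _root_.IsGamble.sub' {u v : X → ℝ} (hu : IsGamble u) (hv : IsGamble v) :
    IsGamble (fun x => u x - v x) := by
  simpa [sub_eq_add_neg] using hu.add' hv.neg'

lemma _root_.IsGamble.smul' {u : X → ℝ} (hu : IsGamble u) (c : ℝ) :
    IsGamble (fun x => c * u x) := by
  obtain ⟨M, hM⟩ := exists_abs_bound hu
  exact isGamble_of_bound (M := |c| * M) fun x => by
    rw [abs_mul]
    exact mul_le_mul_of_nonneg_left (hM x) (abs_nonneg c)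

lemma _root_.IsGamble.comp' {u : X → ℝ} (hu : IsGamble u) (T : X → X) :
    IsGamble (fun x => u (T x)) := by
  obtain ⟨M, hM⟩ := exists_abs_bound hu
  exact isGamble_of_bound (M := M) fun x => hM (T x)

lemma _root_.IsGamble.add {u v : X → ℝ} (hu : IsGamble u) (hv : IsGamble v) :
    IsGamble (u + v) := hu.add' hv

lemma _root_.IsGamble.neg {u : X → ℝ} (hu : IsGamble u) : IsGamble (-u) := hu.neg'

lemma _root_.IsGamble.sub {u v : X → ℝ} (hu : IsGamble u) (hv : IsGamble v) :
    IsGamble (u - v) := hu.sub' hv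

lemma isGamble_finsum {ι : Type*} (s : Finset ι) (F : ι → X → ℝ)
    (h : ∀ i ∈ s, IsGamble (F i)) : IsGamble (∑ i ∈ s, F i) := by
  induction s using Finset.cons_induction with
  | empty => simpa using isGamble_zero
  | cons a s ha ih =>
      rw [Finset.sum_cons]
      exact (h a (Finset.mem_cons_self a s)).add
        (ih fun i hi => h i (Finset.mem_cons_of_mem hi))

variable [Nonempty X]

lemma le_sSup_range {u : X → ℝ} (hu : BddAbove (Set.range u)) (x : X) :
    u x ≤ sSup (Set.range u) := le_csSup hu (Set.mem_range_self x)

lemma sInf_range_le {u : X → ℝ} (hu : BddBelow (Set.range u)) (x : X) :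
    sInf (Set.range u) ≤ u x := csInf_le hu (Set.mem_range_self x)

lemma inf_add_sup_le {u v : X → ℝ} (hu : IsGamble u) (hv : IsGamble v) :
    sInf (Set.range u) + sSup (Set.range v) ≤ sSup (Set.range fun x => u x + v x) := by
  have hb : BddAbove (Set.range fun x => u x + v x) := (hu.add' hv).1
  have h1 : sSup (Set.range v) ≤ sSup (Set.range fun x => u x + v x) - sInf (Set.range u) := by
    apply csSup_le (Set.range_nonempty v)
    rintro y ⟨x, rfl⟩
    have h2 : u x + v x ≤ sSup (Set.range fun x => u x + v x) := le_sSup_range hb x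
    have h3 : sInf (Set.range u) ≤ u x := sInf_range_le hu.2 x
    linarith
  linarith

lemma sup_add_le {u v : X → ℝ} (hu : IsGamble u) (hv : IsGamble v) :
    sSup (Set.range fun x => u x + v x) ≤ sSup (Set.range u) + sSup (Set.range v) := by
  apply csSup_le (Set.range_nonempty _)
  rintro y ⟨x, rfl⟩
  exact add_le_add (le_sSup_range hu.1 x) (le_sSup_range hv.1 x)

lemma sSup_range_neg (u : X → ℝ) :
    sSup (Set.range fun x => -u x) = -sInf (Set.range u) := by
  have hset : Set.range (fun x => -u x) = -(Set.range u) := by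
    ext y
    simp only [Set.mem_range, Set.mem_neg]
    constructor
    · rintro ⟨x, rfl⟩; exact ⟨x, by ring⟩
    · rintro ⟨x, hx⟩; exact ⟨x, by rw [hx, neg_neg]⟩
  rw [hset, Real.sInf_def, neg_neg]

lemma sSup_range_mul {u : X → ℝ} (hu : IsGamble u) {c : ℝ} (hc : 0 < c) :
    sSup (Set.range fun x => c * u x) = c * sSup (Set.range u) := by
  have h := (isLUB_csSup (Set.range_nonempty u) hu.1).mul_left hc.le
  have hset : (fun b => c * b) '' Set.range u = Set.range fun x => c * u x := by
    rw [← Set.range_comp]; rfl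
  rw [hset] at h
  exact h.csSup_eq (Set.range_nonempty _)

/-- The sum of differences determined by a list of (gamble, transformation) pairs. -/
def dsum (l : List ((X → ℝ) × (X → X))) : X → ℝ :=
  fun x => (l.map (fun p => p.1 x - p.1 (p.2 x))).sum

lemma dsum_nil (x : X) : dsum ([] : List ((X → ℝ) × (X → X))) x = 0 := rfl

lemma dsum_cons (p : (X → ℝ) × (X → X)) (l : List ((X → ℝ) × (X → X))) (x : X) :
    dsum (p :: l) x = (p.1 x - p.1 (p.2 x)) + dsum l x := by
  simp [dsum]

lemma dsum_append (l₁ l₂ : List ((X → ℝ) × (X → X))) (x : X) :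
    dsum (l₁ ++ l₂) x = dsum l₁ x + dsum l₂ x := by
  simp [dsum]

lemma dsum_gamble (l : List ((X → ℝ) × (X → X))) (h : ∀ p ∈ l, IsGamble p.1) :
    IsGamble (dsum l) := by
  induction l with
  | nil => exact isGamble_const 0
  | cons p l ih =>
      have h1 : IsGamble p.1 := h p List.mem_cons_self
      have h2 := ih fun q hq => h q (List.mem_cons_of_mem _ hq)
      have := ((h1.sub' (h1.comp' p.2)).add' h2)
      have e : dsum (p :: l) = fun x => p.1 x - p.1 (p.2 x) + dsum l x := funext (dsum_cons p l)
      rw [e]; exact this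

lemma dsum_smul (c : ℝ) (l : List ((X → ℝ) × (X → X))) (x : X) :
    dsum (l.map fun p => (fun y => c * p.1 y, p.2)) x = c * dsum l x := by
  induction l with
  | nil => simp [dsum]
  | cons p l ih =>
      simp only [List.map_cons, dsum_cons] at *
      rw [ih]; ring

lemma dsum_eq_finsum (l : List ((X → ℝ) × (X → X))) (x : X) :
    dsum l x = ∑ k : Fin l.length, ((l.get k).1 x - (l.get k).1 ((l.get k).2 x)) := by
  induction l with
  | nil => simp [dsum]
  | cons p l ih =>
      rw [dsum_cons, ih]
      simp [List.length_cons, Fin.sum_univ_succ]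
      ring

/-- The set of upper estimates used to define the sublinear functional. -/
def SupSet8 (𝒯 : Set (X → X)) (f : X → ℝ) : Set ℝ :=
  {r | ∃ l : List ((X → ℝ) × (X → X)), (∀ p ∈ l, IsGamble p.1 ∧ p.2 ∈ 𝒯) ∧
      r = sSup (Set.range fun x => f x + dsum l x)}

noncomputable def NN (𝒯 : Set (X → X)) (f : X → ℝ) : ℝ := sInf (SupSet8 𝒯 f)

lemma sSup_mem_SupSet8 (𝒯 : Set (X → X)) (f : X → ℝ) :
    sSup (Set.range f) ∈ SupSet8 𝒯 f := by
  refine ⟨[], by simp, ?_⟩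
  congr 1
  ext y
  constructor
  · rintro ⟨x, rfl⟩; exact ⟨x, by simp [dsum_nil]⟩
  · rintro ⟨x, rfl⟩; exact ⟨x, by simp [dsum_nil]⟩

section Hyp

variable {𝒯 : Set (X → X)}
  (hyp : ∀ l : List ((X → ℝ) × (X → X)), (∀ p ∈ l, IsGamble p.1 ∧ p.2 ∈ 𝒯) →
    0 ≤ sSup (Set.range (dsum l)))

include hyp

lemma lb_SupSet8 {f : X → ℝ} (hf : IsGamble f) :
    ∀ r ∈ SupSet8 𝒯 f, sInf (Set.range f) ≤ r := by
  rintro r ⟨l, hl, rfl⟩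
  have hd : IsGamble (dsum l) := dsum_gamble l fun p hp => (hl p hp).1
  have h1 := inf_add_sup_le hf hd
  have h2 := hyp l hl
  linarith

lemma bddBelow_SupSet8 {f : X → ℝ} (hf : IsGamble f) : BddBelow (SupSet8 𝒯 f) :=
  ⟨sInf (Set.range f), fun r hr => lb_SupSet8 hyp hf r hr⟩

lemma NN_le_sSup {f : X → ℝ} (hf : IsGamble f) : NN 𝒯 f ≤ sSup (Set.range f) :=
  csInf_le (bddBelow_SupSet8 hyp hf) (sSup_mem_SupSet8 𝒯 f)

lemma sInf_le_NN {f : X → ℝ} (hf : IsGamble f) : sInf (Set.range f) ≤ NN 𝒯 f :=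
  le_csInf ⟨_, sSup_mem_SupSet8 𝒯 f⟩ (lb_SupSet8 hyp hf)

lemma NN_add_le {f g : X → ℝ} (hf : IsGamble f) (hg : IsGamble g) :
    NN 𝒯 (f + g) ≤ NN 𝒯 f + NN 𝒯 g := by
  have key : ∀ a ∈ SupSet8 𝒯 f, ∀ b ∈ SupSet8 𝒯 g, NN 𝒯 (f + g) ≤ a + b := by
    rintro a ⟨l₁, hl₁, rfl⟩ b ⟨l₂, hl₂, rfl⟩
    have hmem : sSup (Set.range fun x => (f + g) x + dsum (l₁ ++ l₂) x) ∈
        SupSet8 𝒯 (f + g) := by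
      refine ⟨l₁ ++ l₂, ?_, rfl⟩
      intro p hp
      rcases List.mem_append.1 hp with h | h
      · exact hl₁ p h
      · exact hl₂ p h
    refine le_trans (csInf_le (bddBelow_SupSet8 hyp (hf.add hg)) hmem) ?_
    have hd₁ : IsGamble (dsum l₁) := dsum_gamble l₁ fun p hp => (hl₁ p hp).1
    have hd₂ : IsGamble (dsum l₂) := dsum_gamble l₂ fun p hp => (hl₂ p hp).1
    have h1 : (fun x => (f + g) x + dsum (l₁ ++ l₂) x)
        = fun x => (f x + dsum l₁ x) + (g x + dsum l₂ x) := by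
      funext x; rw [dsum_append]; simp [Pi.add_apply]; ring
    rw [h1]
    exact sup_add_le (hf.add' hd₁) (hg.add' hd₂)
  have h2 : ∀ a ∈ SupSet8 𝒯 f, NN 𝒯 (f + g) - a ≤ NN 𝒯 g := by
    intro a ha
    apply le_csInf ⟨_, sSup_mem_SupSet8 𝒯 g⟩
    intro b hb
    have := key a ha b hb
    linarith
  have h3 : ∀ a ∈ SupSet8 𝒯 f, NN 𝒯 (f + g) - NN 𝒯 g ≤ a := by
    intro a ha
    have := h2 a ha; linarith
  have h4 : NN 𝒯 (f + g) - NN 𝒯 g ≤ NN 𝒯 f :=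
    le_csInf ⟨_, sSup_mem_SupSet8 𝒯 f⟩ h3
  linarith

lemma NN_smul_le {f : X → ℝ} (hf : IsGamble f) {c : ℝ} (hc : 0 < c) :
    NN 𝒯 (fun x => c * f x) ≤ c * NN 𝒯 f := by
  have key : ∀ r ∈ SupSet8 𝒯 f, NN 𝒯 (fun x => c * f x) ≤ c * r := by
    rintro r ⟨l, hl, rfl⟩
    have hd : IsGamble (dsum l) := dsum_gamble l fun p hp => (hl p hp).1
    set l' : List ((X → ℝ) × (X → X)) := l.map fun p => (fun y => c * p.1 y, p.2) with hl'
    have hok : ∀ p ∈ l', IsGamble p.1 ∧ p.2 ∈ 𝒯 := by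
      intro p hp
      rw [hl', List.mem_map] at hp
      obtain ⟨q, hq, rfl⟩ := hp
      exact ⟨((hl q hq).1).smul' c, (hl q hq).2⟩
    have hmem : sSup (Set.range fun x => (fun x => c * f x) x + dsum l' x) ∈
        SupSet8 𝒯 (fun x => c * f x) := ⟨l', hok, rfl⟩
    refine le_trans (csInf_le (bddBelow_SupSet8 hyp (hf.smul' c)) hmem) ?_
    have h1 : (fun x => (fun x => c * f x) x + dsum l' x)
        = fun x => c * (f x + dsum l x) := by
      funext x; rw [hl', dsum_smul]; ring
    rw [h1, sSup_range_mul (hf.add' hd) hc]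
  have h2 : ∀ r ∈ SupSet8 𝒯 f, c⁻¹ * NN 𝒯 (fun x => c * f x) ≤ r := by
    intro r hr
    have h := key r hr
    calc c⁻¹ * NN 𝒯 (fun x => c * f x) ≤ c⁻¹ * (c * r) :=
          mul_le_mul_of_nonneg_left h (inv_nonneg.2 hc.le)
      _ = r := by field_simp
  have h3 : c⁻¹ * NN 𝒯 (fun x => c * f x) ≤ NN 𝒯 f :=
    le_csInf ⟨_, sSup_mem_SupSet8 𝒯 f⟩ h2
  calc NN 𝒯 (fun x => c * f x) = c * (c⁻¹ * NN 𝒯 (fun x => c * f x)) := by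
        field_simp
    _ ≤ c * NN 𝒯 f := mul_le_mul_of_nonneg_left h3 hc.le

lemma NN_smul {f : X → ℝ} (hf : IsGamble f) {c : ℝ} (hc : 0 < c) :
    NN 𝒯 (fun x => c * f x) = c * NN 𝒯 f := by
  refine le_antisymm (NN_smul_le hyp hf hc) ?_
  have h1 := NN_smul_le hyp (hf.smul' c) (inv_pos.2 hc)
  have h2 : (fun x => c⁻¹ * (fun x => c * f x) x) = f := by
    funext x; field_simp
  rw [h2] at h1
  have := mul_le_mul_of_nonneg_left h1 hc.le
  rw [← mul_assoc, mul_inv_cancel₀ hc.ne', one_mul] at this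
  linarith

end Hyp

end Stmt8Aux

open Stmt8Aux

theorem stmt8 (X : Type*) [Nonempty X] (𝒯 : Set (X → X))
    (h𝒯 : IsTransformationMonoid 𝒯) :
    (∃ P : (X → ℝ) → ℝ, IsCoherentPrevision P ∧
        ∀ f : X → ℝ, IsGamble f → ∀ T ∈ 𝒯, P (f ∘ T) = P f) ↔
    (∀ (n : ℕ) (fs : Fin n → X → ℝ) (Ts : Fin n → X → X),
        (∀ k, IsGamble (fs k)) → (∀ k, Ts k ∈ 𝒯) →
        0 ≤ ⨆ x : X, ∑ k, (fs k x - fs k (Ts k x))) := by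
  classical
  constructor
  · rintro ⟨P, ⟨Padd, Pinf⟩, Pinv⟩ n fs Ts hfs hTs
    have hP0 : P 0 = 0 := by
      have h := Padd 0 0 isGamble_zero isGamble_zero
      rw [add_zero] at h
      linarith
    set F : Fin n → X → ℝ := fun k => fs k - fs k ∘ Ts k with hF
    have hFg : ∀ k, IsGamble (F k) := fun k => (hfs k).sub ((hfs k).comp' (Ts k))
    have hPF : ∀ k, P (F k) = 0 := by
      intro k
      have hcomp : IsGamble (fs k ∘ Ts k) := (hfs k).comp' (Ts k)
      have h1 := Padd (fs k ∘ Ts k) (F k) hcomp (hFg k)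
      have h2 : fs k ∘ Ts k + F k = fs k := by
        funext x
        simp [hF, Function.comp]
      rw [h2] at h1
      have h3 := Pinv (fs k) (hfs k) (Ts k) (hTs k)
      linarith
    have hsum : ∀ s : Finset (Fin n),
        IsGamble (∑ k ∈ s, F k) ∧ P (∑ k ∈ s, F k) = 0 := by
      intro s
      induction s using Finset.cons_induction with
      | empty => simpa using ⟨isGamble_zero, hP0⟩
      | cons a s ha ih =>
          rw [Finset.sum_cons]
          refine ⟨(hFg a).add ih.1, ?_⟩
          rw [Padd _ _ (hFg a) ih.1, hPF a, ih.2, add_zero]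
    set g : X → ℝ := ∑ k, F k with hg
    obtain ⟨hgG, hPg⟩ := hsum Finset.univ
    have hPneg : P g + P (-g) = 0 := by
      have h := Padd g (-g) hgG hgG.neg
      rw [add_neg_cancel, hP0] at h
      linarith
    have h2 : sInf (Set.range (-g)) ≤ P (-g) := Pinf _ hgG.neg
    have h3 : sSup (Set.range fun x => -(-g) x) = -sInf (Set.range (-g)) :=
      sSup_range_neg (-g)
    have h4 : (fun x => -(-g) x) = g := by funext x; simp
    rw [h4] at h3
    have h5 : P g ≤ sSup (Set.range g) := by linarith
    have h6 : (fun x : X => ∑ k, (fs k x - fs k (Ts k x))) = g := by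
      funext x
      rw [hg, Finset.sum_apply]
      rfl
    rw [← sSup_range, h6]
    linarith
  · intro hypfin
    have hyp : ∀ l : List ((X → ℝ) × (X → X)),
        (∀ p ∈ l, IsGamble p.1 ∧ p.2 ∈ 𝒯) → 0 ≤ sSup (Set.range (dsum l)) := by
      intro l hl
      have h := hypfin l.length (fun k => (l.get k).1) (fun k => (l.get k).2)
        (fun k => (hl _ (l.get_mem k)).1) (fun k => (hl _ (l.get_mem k)).2)
      have h1 : (fun x : X => ∑ k : Fin l.length,
          ((l.get k).1 x - (l.get k).1 ((l.get k).2 x))) = dsum l := by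
        funext x
        rw [dsum_eq_finsum]
      rw [← sSup_range, h1] at h
      exact h
    -- the submodule of gambles
    set G : Submodule ℝ (X → ℝ) :=
      { carrier := {f | IsGamble f}
        add_mem' := fun hf hg => hf.add hg
        zero_mem' := isGamble_zero
        smul_mem' := fun c f hf => by
          have := hf.smul' c
          simpa [HSMul.hSMul, SMul.smul] using this } with hG
    set N : G → ℝ := fun v => NN 𝒯 v.1 with hN
    have hNhom : ∀ c : ℝ, 0 < c → ∀ v : G, N (c • v) = c * N v := by
      intro c hc v
      have h1 : ((c • v : G) : X → ℝ) = fun x => c * v.1 x := rfl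
      rw [hN]
      show NN 𝒯 ((c • v : G) : X → ℝ) = c * NN 𝒯 v.1
      rw [h1]
      exact NN_smul hyp v.2 hc
    have hNadd : ∀ v w : G, N (v + w) ≤ N v + N w := by
      intro v w
      exact NN_add_le hyp v.2 w.2
    set f0 : G →ₗ.[ℝ] ℝ := ⟨⊥, 0⟩ with hf0
    have hf0le : ∀ x : f0.domain, f0 x ≤ N x := by
      rintro ⟨x, hx⟩
      have hx0 : x = 0 := by simpa [hf0] using hx
      have h1 : f0 ⟨x, hx⟩ = 0 := rfl
      rw [h1]
      have h2 : sInf (Set.range ((0 : G) : X → ℝ)) ≤ N (0 : G) :=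
        sInf_le_NN hyp (G.zero_mem : IsGamble _)
      have h3 : Set.range ((0 : G) : X → ℝ) = {0} := by
        have : ((0 : G) : X → ℝ) = fun _ => (0 : ℝ) := rfl
        rw [this, Set.range_const]
      rw [h3, csInf_singleton] at h2
      subst hx0
      exact h2
    obtain ⟨L, -, hL⟩ := exists_extension_of_le_sublinear f0 N hNhom hNadd hf0le
    refine ⟨fun f => if h : IsGamble f then L ⟨f, h⟩ else 0, ⟨?_, ?_⟩, ?_⟩
    · -- additivity
      intro f g hf hg
      simp only [dif_pos (hf.add hg), dif_pos hf, dif_pos hg]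
      have : (⟨f + g, hf.add hg⟩ : G) = ⟨f, hf⟩ + ⟨g, hg⟩ := rfl
      rw [this, map_add]
    · -- lower bound
      intro f hf
      simp only [dif_pos hf]
      have h4 : L (-⟨f, hf⟩) ≤ sSup (Set.range fun x => -f x) := by
        calc L (-⟨f, hf⟩) ≤ N (-⟨f, hf⟩) := hL _
          _ = NN 𝒯 (fun x => -f x) := rfl
          _ ≤ sSup (Set.range fun x => -f x) := NN_le_sSup hyp hf.neg'
      rw [sSup_range_neg f] at h4
      have h5 : L (-(⟨f, hf⟩ : G)) = -L ⟨f, hf⟩ := map_neg L _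
      rw [h5] at h4
      linarith
    · -- invariance
      intro f hf T hT
      have hfT : IsGamble (f ∘ T) := hf.comp' T
      simp only [dif_pos hfT, dif_pos hf]
      -- L (⟨f∘T⟩ - ⟨f⟩) ≤ 0
      have h1 : L (⟨f ∘ T, hfT⟩ - ⟨f, hf⟩) ≤ 0 := by
        have hmem : (0 : ℝ) ∈ SupSet8 𝒯 (f ∘ T - f) := by
          refine ⟨[(f, T)], ?_, ?_⟩
          · intro p hp
            simp only [List.mem_singleton] at hp
            subst hp
            exact ⟨hf, hT⟩
          · have : (fun x => (f ∘ T - f) x + dsum [(f, T)] x) = fun _ : X => 0 := by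
              funext x
              simp [dsum_cons, dsum_nil, Function.comp]
            rw [this]
            have : Set.range (fun _ : X => (0 : ℝ)) = {0} := Set.range_const
            rw [this, csSup_singleton]
        have hNle : N (⟨f ∘ T, hfT⟩ - ⟨f, hf⟩) ≤ 0 := by
          have : N (⟨f ∘ T, hfT⟩ - ⟨f, hf⟩) = NN 𝒯 (f ∘ T - f) := rfl
          rw [this]
          exact csInf_le (bddBelow_SupSet8 hyp (hfT.sub hf)) hmem
        exact le_trans (hL _) hNle
      -- L (⟨f⟩ - ⟨f∘T⟩) ≤ 0
      have h2 : L (⟨f, hf⟩ - ⟨f ∘ T, hfT⟩) ≤ 0 := by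
        have hmem : (0 : ℝ) ∈ SupSet8 𝒯 (f - f ∘ T) := by
          refine ⟨[(fun x => -f x, T)], ?_, ?_⟩
          · intro p hp
            simp only [List.mem_singleton] at hp
            subst hp
            exact ⟨hf.neg', hT⟩
          · have : (fun x => (f - f ∘ T) x + dsum [(fun x => -f x, T)] x)
                = fun _ : X => 0 := by
              funext x
              simp [dsum_cons, dsum_nil, Function.comp]
            rw [this]
            have : Set.range (fun _ : X => (0 : ℝ)) = {0} := Set.range_const
            rw [this, csSup_singleton]
        have hNle : N (⟨f, hf⟩ - ⟨f ∘ T, hfT⟩) ≤ 0 := by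
          have : N (⟨f, hf⟩ - ⟨f ∘ T, hfT⟩) = NN 𝒯 (f - f ∘ T) := rfl
          rw [this]
          exact csInf_le (bddBelow_SupSet8 hyp (hf.sub hfT)) hmem
        exact le_trans (hL _) hNle
      rw [map_sub] at h1 h2
      linarith
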